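/- Let A = [[λ₁, e^{iφ}|λ₂−λ₁|cot θ], [0, λ₂]] with λ₁ ≠ λ₂, Re(λ₁) < 0, Re(λ₂) < 0, and θ ∈ (0, π/2]. If θ < arctan(|λ₁−λ₂| / (2√(Re(λ₁)Re(λ₂)))), then there exists t > 0 with ‖e^{At}‖₂ > 1. -/

import Mathlib

open scoped Matrix
open Complex Real

/-- The numerical range of a square complex matrix. -/
def numRange {N : ℕ} (M : Matrix (Fin N) (Fin N) ℂ) : Set ℂ :=
  {z | ∃ x : EuclideanSpace ℂ (Fin N), ‖x‖ = 1 ∧ star (x : Fin N → ℂ) ⬝ᵥ M.mulVec x = z}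

/-- The numerical abscissa of a square complex matrix. -/
noncomputable def numAbs {N : ℕ} (M : Matrix (Fin N) (Fin N) ℂ) : ℝ :=
  sSup {r : ℝ | ∃ x : EuclideanSpace ℂ (Fin N), ‖x‖ = 1 ∧ (star (x : Fin N → ℂ) ⬝ᵥ M.mulVec x).re = r}

/-- The spectral (operator 2-)norm of a square complex matrix. -/
noncomputable def spec2 {N : ℕ} (M : Matrix (Fin N) (Fin N) ℂ) : ℝ :=
  ‖Matrix.toEuclideanCLM (𝕜 := ℂ) M‖

/-- The squared Frobenius norm of a square complex matrix. -/
noncomputable def frobSq {N : ℕ} (M : Matrix (Fin N) (Fin N) ℂ) : ℝ :=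
  ∑ i, ∑ j, ‖M i j‖ ^ 2

open scoped ComplexInnerProductSpace

/-- Auxiliary real-linear map `M ↦ (toEuclideanCLM M) x`. -/
noncomputable def myLaux (x : EuclideanSpace ℂ (Fin 2)) :
    Matrix (Fin 2) (Fin 2) ℂ →ₗ[ℝ] EuclideanSpace ℂ (Fin 2) where
  toFun M := Matrix.toEuclideanCLM (𝕜 := ℂ) M x
  map_add' M N := by simp
  map_smul' r M := by
    have h : (r • M : Matrix (Fin 2) (Fin 2) ℂ) = ((r : ℂ) • M) := by
      ext i j; simp [Complex.real_smul]
    show (Matrix.toEuclideanCLM (𝕜 := ℂ) (r • M)) x = r • (Matrix.toEuclideanCLM (𝕜 := ℂ) M) x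
    rw [h, map_smul, ContinuousLinearMap.smul_apply, Complex.coe_smul]

/-- If the real part of the numerical-range value at a unit vector is positive, then the
matrix exponential exhibits transient growth. -/
theorem auxGrowth (A : Matrix (Fin 2) (Fin 2) ℂ) (x : EuclideanSpace ℂ (Fin 2)) (hx : ‖x‖ = 1)
    (hpos : 0 < 2 * (⟪x, Matrix.toEuclideanCLM (𝕜 := ℂ) A x⟫).re) :
    ∃ t : ℝ, 0 < t ∧ 1 < ‖Matrix.toEuclideanCLM (𝕜 := ℂ) (NormedSpace.exp ((t:ℂ) • A))‖ := by
  letI : NormedRing (Matrix (Fin 2) (Fin 2) ℂ) := Matrix.linftyOpNormedRing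
  letI : NormedAlgebra ℂ (Matrix (Fin 2) (Fin 2) ℂ) := Matrix.linftyOpNormedAlgebra
  have hA : HasDerivAt (fun t : ℝ => NormedSpace.exp ((t : ℂ) • A)) A 0 := by
    have h1 : HasDerivAt (fun u : ℂ => NormedSpace.exp (u • A))
        (NormedSpace.exp ((0:ℂ) • A) * A) 0 := hasDerivAt_exp_smul_const A (0:ℂ)
    have h2 : HasDerivAt (fun t : ℝ => (t : ℂ)) 1 0 := Complex.ofRealCLM.hasDerivAt
    have := HasDerivAt.scomp_of_eq (𝕜 := ℝ) (𝕜' := ℂ)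
        (F := Matrix (Fin 2) (Fin 2) ℂ) (h := fun t : ℝ => (t:ℂ)) 0 h1 h2 (by norm_num)
    convert this using 1
    case e'_4 => rfl
    case e'_5 => rfl
    case e'_6 => rfl
    case e'_8 => rfl
    case e'_9 => simp
  set y : ℝ → EuclideanSpace ℂ (Fin 2) :=
    fun t => Matrix.toEuclideanCLM (𝕜 := ℂ) (NormedSpace.exp ((t:ℂ) • A)) x with hy_def
  have hy : HasDerivAt y (Matrix.toEuclideanCLM (𝕜 := ℂ) A x) 0 :=
    by have h := ((myLaux x).toContinuousLinearMap.hasFDerivAt (x := NormedSpace.exp (((0:ℝ):ℂ) • A))).comp_hasDerivAt (0:ℝ) hA; exact h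
  have hy0 : y 0 = x := by simp [hy_def]
  have hinner : HasDerivAt (fun t => ⟪y t, y t⟫)
      (⟪y 0, Matrix.toEuclideanCLM (𝕜 := ℂ) A x⟫ + ⟪Matrix.toEuclideanCLM (𝕜 := ℂ) A x, y 0⟫) 0 :=
    hy.inner ℂ hy
  have hre : HasDerivAt (fun t => (⟪y t, y t⟫).re)
      (2 * (⟪x, Matrix.toEuclideanCLM (𝕜 := ℂ) A x⟫).re) 0 := by
    have := (Complex.reCLM.hasFDerivAt).comp_hasDerivAt 0 hinner
    rw [hy0] at this
    convert this using 1
    case e'_4 => rfl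
    case e'_5 => rfl
    case e'_8 => rfl
    simp [inner_conj_symm]
    rw [← inner_conj_symm (Matrix.toEuclideanCLM (𝕜 := ℂ) A x) x, Complex.conj_re]
    ring
  -- positive derivative at 0 gives local growth
  have hex : ∃ t : ℝ, 0 < t ∧ (⟪y 0, y 0⟫).re < (⟪y t, y t⟫).re := by
    have hslope := hasDerivAt_iff_tendsto_slope.mp hre
    have hslope' : Filter.Tendsto (slope (fun t => (⟪y t, y t⟫).re) 0) (nhdsWithin 0 (Set.Ioi 0))
        (nhds (2 * (⟪x, Matrix.toEuclideanCLM (𝕜 := ℂ) A x⟫).re)) :=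
      hslope.mono_left (nhdsWithin_mono _ (fun t ht => ne_of_gt ht))
    have hev : ∀ᶠ t in nhdsWithin 0 (Set.Ioi 0),
        0 < slope (fun t => (⟪y t, y t⟫).re) 0 t :=
      hslope' (Ioi_mem_nhds hpos)
    obtain ⟨t, ht, hts⟩ := (hev.and self_mem_nhdsWithin).exists
    refine ⟨t, hts, ?_⟩
    rw [slope_def_field] at ht
    rcases div_pos_iff.mp ht with ⟨hd, _⟩ | ⟨_, hneg⟩
    · linarith
    · simp at hneg; linarith
  obtain ⟨t, ht, hgt⟩ := hex
  refine ⟨t, ht, ?_⟩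
  have h1 : (⟪y 0, y 0⟫).re = 1 := by
    rw [hy0]
    have : RCLike.re (⟪x, x⟫ : ℂ) = ‖x‖ ^ 2 := inner_self_eq_norm_sq x
    rw [show ((⟪x, x⟫ : ℂ).re) = RCLike.re (⟪x, x⟫ : ℂ) from rfl, this, hx]; norm_num
  have h2 : (⟪y t, y t⟫).re = ‖y t‖^2 := by
    rw [show ((⟪y t, y t⟫ : ℂ).re) = RCLike.re (⟪y t, y t⟫ : ℂ) from rfl]
    exact inner_self_eq_norm_sq (y t)
  have h3 : 1 < ‖y t‖ ^ 2 := by rw [← h2, ← h1]; exact hgt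
  have h4 : ‖y t‖ ≤ ‖Matrix.toEuclideanCLM (𝕜 := ℂ) (NormedSpace.exp ((t:ℂ) • A))‖ := by
    calc ‖y t‖ ≤ ‖Matrix.toEuclideanCLM (𝕜 := ℂ) (NormedSpace.exp ((t:ℂ) • A))‖ * ‖x‖ :=
          ContinuousLinearMap.le_opNorm _ _
      _ = _ := by rw [hx, mul_one]
  nlinarith [norm_nonneg (y t)]

/-- Explicit formula for the numerical-range value of the companion-type matrix at the
chosen vector. -/
theorem innerForm (lam1 lam2 : ℂ) (m φ s0 s1 : ℝ)
    (A : Matrix (Fin 2) (Fin 2) ℂ)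
    (hA : A = !![lam1, Complex.exp (Complex.I * (φ : ℂ)) * (m : ℂ); 0, lam2])
    (x : EuclideanSpace ℂ (Fin 2))
    (hx : x = (WithLp.equiv 2 (Fin 2 → ℂ)).symm
      ![(s0 : ℂ), Complex.exp (-(Complex.I * (φ : ℂ))) * (s1 : ℂ)]) :
    (⟪x, Matrix.toEuclideanCLM (𝕜 := ℂ) A x⟫ : ℂ)
      = lam1 * (s0 : ℂ)^2 + (m : ℂ) * s0 * s1 + lam2 * (s1 : ℂ)^2 := by
  set c : ℂ := Complex.exp (Complex.I * (φ : ℂ)) * (m : ℂ) with hc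
  set v : Fin 2 → ℂ := ![(s0 : ℂ), Complex.exp (-(Complex.I * (φ : ℂ))) * (s1 : ℂ)] with hv
  have hw : Matrix.toLin' A v = ![lam1 * v 0 + c * v 1, lam2 * v 1] := by
    funext i
    fin_cases i <;>
      simp [hA, hv, Matrix.toLin'_apply, Matrix.mulVec, dotProduct, Fin.sum_univ_two]
  rw [hx]; change ⟪(WithLp.equiv 2 (Fin 2 → ℂ)).symm v, (WithLp.equiv 2 (Fin 2 → ℂ)).symm (Matrix.toLin' A v)⟫ = _
  rw [hw]
  have hin : (⟪(WithLp.equiv 2 (Fin 2 → ℂ)).symm v,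
      (WithLp.equiv 2 (Fin 2 → ℂ)).symm ![lam1 * v 0 + c * v 1, lam2 * v 1]⟫ : ℂ)
      = (starRingEnd ℂ) (v 0) * (lam1 * v 0 + c * v 1)
        + (starRingEnd ℂ) (v 1) * (lam2 * v 1) := by
    simp [PiLp.inner_apply, Fin.sum_univ_two]; ring
  rw [hin]
  have hv0 : v 0 = (s0 : ℂ) := rfl
  have hv1 : v 1 = Complex.exp (-(Complex.I * (φ : ℂ))) * (s1 : ℂ) := rfl
  have hconj1 : (starRingEnd ℂ) (v 1) = Complex.exp (Complex.I * (φ : ℂ)) * (s1 : ℂ) := by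
    rw [hv1, map_mul, ← Complex.exp_conj, Complex.conj_ofReal]
    simp
  rw [hconj1, hv0, hv1, Complex.conj_ofReal, hc]
  have h2 : Complex.exp (-(Complex.I * φ)) * Complex.exp (Complex.I * φ) = 1 := by
    rw [← Complex.exp_add]; simp
  ring_nf
  ring_nf at h2 ⊢
  rw [h2]
  ring

/-- The chosen vector is a unit vector. -/
theorem normX (s0 s1 φ : ℝ) (h0 : 0 ≤ s0) (h1 : 0 ≤ s1) (hsum : s0^2 + s1^2 = 1) :
    ‖((WithLp.equiv 2 (Fin 2 → ℂ)).symm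
      ![(s0 : ℂ), Complex.exp (-(Complex.I * (φ : ℂ))) * (s1 : ℂ)] :
        EuclideanSpace ℂ (Fin 2))‖ = 1 := by
  rw [EuclideanSpace.norm_eq]
  have e0 : ‖((s0 : ℂ))‖ = s0 := by
    rw [Complex.norm_real]; exact abs_of_nonneg h0
  have e1 : ‖Complex.exp (-(Complex.I * (φ : ℂ))) * (s1 : ℂ)‖ = s1 := by
    rw [norm_mul, Complex.norm_exp, Complex.norm_real]
    simp [_root_.abs_of_nonneg h1]
  rw [Fin.sum_univ_two]
  show Real.sqrt (‖(s0 : ℂ)‖ ^ 2 + ‖Complex.exp (-(Complex.I * (φ : ℂ))) * (s1 : ℂ)‖ ^ 2) = 1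
  rw [e0, e1, hsum, Real.sqrt_one]

/-- The key real inequality. -/
theorem keyIneq (p q m : ℝ) (hp : 0 < p) (hq : 0 < q) (hm : 2 * Real.sqrt (p*q) < m) :
    0 < 2 * (-p * (q/(p+q)) + m * (Real.sqrt (p*q)/(p+q)) + -q * (p/(p+q))) := by
  have h1 : 0 < Real.sqrt (p*q) := Real.sqrt_pos.mpr (by positivity)
  have h2 : Real.sqrt (p*q)^2 = p*q := Real.sq_sqrt (by positivity)
  have hpq : 0 < p + q := by linarith
  have e : -p * (q/(p+q)) + m * (Real.sqrt (p*q)/(p+q)) + -q * (p/(p+q))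
      = (m * Real.sqrt (p*q) - 2*(p*q))/(p+q) := by
    field_simp; ring
  rw [e]
  have hnum : 0 < m * Real.sqrt (p*q) - 2*(p*q) := by nlinarith
  have := div_pos hnum hpq
  linarith

/-- Transient growth of the matrix exponential of A = [[λ₁, e^{iφ}|λ₂−λ₁|cot θ],[0, λ₂]]
when the eigenvector angle θ is small enough. -/
theorem stmt8 (lam1 lam2 : ℂ) (hne : lam1 ≠ lam2)
    (h1 : lam1.re < 0) (h2 : lam2.re < 0)
    (θ φ : ℝ) (hθ : θ ∈ Set.Ioc 0 (Real.pi / 2))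
    (A : Matrix (Fin 2) (Fin 2) ℂ)
    (hA : A = !![lam1, Complex.exp (Complex.I * (φ : ℂ)) *
        ((‖lam2 - lam1‖ * Real.cot θ : ℝ) : ℂ); 0, lam2])
    (hθlt : θ < Real.arctan (‖lam1 - lam2‖ / (2 * Real.sqrt (lam1.re * lam2.re)))) :
    ∃ t : ℝ, 0 < t ∧ 1 < spec2 (NormedSpace.exp ((t : ℂ) • A)) := by
  set p : ℝ := -lam1.re with hp_def
  set q : ℝ := -lam2.re with hq_def
  have hp : 0 < p := by simp [hp_def]; linarith
  have hq : 0 < q := by simp [hq_def]; linarith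
  have hpq : 0 < p + q := by linarith
  have hprod : lam1.re * lam2.re = p * q := by rw [hp_def, hq_def]; ring
  set m : ℝ := ‖lam2 - lam1‖ * Real.cot θ with hm_def
  set d : ℝ := ‖lam1 - lam2‖ with hd_def
  have hd : 0 < d := by
    rw [hd_def]
    exact norm_pos_iff.mpr (sub_ne_zero.mpr hne)
  have habs : ‖lam2 - lam1‖ = d := by rw [hd_def]; exact norm_sub_rev lam2 lam1
  have hr : 0 < Real.sqrt (p * q) := Real.sqrt_pos.mpr (by positivity)
  set K : ℝ := d / (2 * Real.sqrt (p * q)) with hK_def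
  have hK : 0 < K := by rw [hK_def]; positivity
  have hθlt' : θ < Real.arctan K := by rwa [hprod] at hθlt
  have hθhalf : θ < Real.pi / 2 := lt_trans hθlt' (Real.arctan_lt_pi_div_two K)
  have htanθ : Real.tan θ < K := by
    have := Real.tan_lt_tan_of_nonneg_of_lt_pi_div_two (le_of_lt hθ.1)
      (Real.arctan_lt_pi_div_two K) hθlt'
    rwa [Real.tan_arctan] at this
  have htanpos : 0 < Real.tan θ := Real.tan_pos_of_pos_of_lt_pi_div_two hθ.1 hθhalf
  have hcot : Real.cot θ = (Real.tan θ)⁻¹ := by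
    rw [Real.cot_eq_cos_div_sin, Real.tan_eq_sin_div_cos, inv_div]
  have hm : 2 * Real.sqrt (p * q) < m := by
    have hKinv : K⁻¹ < (Real.tan θ)⁻¹ := inv_strictAnti₀ htanpos htanθ
    have hKinv_val : K⁻¹ = 2 * Real.sqrt (p * q) / d := by
      rw [hK_def, inv_div]
    have : d * K⁻¹ < d * (Real.tan θ)⁻¹ := by
      exact mul_lt_mul_of_pos_left hKinv hd
    rw [hm_def, habs, hcot]
    calc 2 * Real.sqrt (p * q) = d * K⁻¹ := by
          rw [hKinv_val]; field_simp
      _ < d * (Real.tan θ)⁻¹ := this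
  -- construct the unit vector
  set s0 : ℝ := Real.sqrt (q / (p + q)) with hs0_def
  set s1 : ℝ := Real.sqrt (p / (p + q)) with hs1_def
  have hs0 : 0 ≤ s0 := Real.sqrt_nonneg _
  have hs1 : 0 ≤ s1 := Real.sqrt_nonneg _
  have hs0sq : s0 ^ 2 = q / (p + q) := Real.sq_sqrt (by positivity)
  have hs1sq : s1 ^ 2 = p / (p + q) := Real.sq_sqrt (by positivity)
  have hsum : s0 ^ 2 + s1 ^ 2 = 1 := by
    rw [hs0sq, hs1sq]; field_simp; ring
  have hss : s0 * s1 = Real.sqrt (p * q) / (p + q) := by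
    rw [hs0_def, hs1_def, ← Real.sqrt_mul (by positivity)]
    rw [show q / (p + q) * (p / (p + q)) = (p * q) / (p + q) ^ 2 by
      rw [div_mul_div_comm]; congr 1; · ring
      · ring]
    rw [Real.sqrt_div (by positivity : (0:ℝ) ≤ p * q), Real.sqrt_sq (le_of_lt hpq)]
  -- the unit vector
  set x : EuclideanSpace ℂ (Fin 2) := (WithLp.equiv 2 (Fin 2 → ℂ)).symm
      ![(s0 : ℂ), Complex.exp (-(Complex.I * (φ : ℂ))) * (s1 : ℂ)] with hx_def
  have hxnorm : ‖x‖ = 1 := normX s0 s1 φ hs0 hs1 hsum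
  have hinner := innerForm lam1 lam2 m φ s0 s1 A hA x hx_def
  have hpos : 0 < 2 * (⟪x, Matrix.toEuclideanCLM (𝕜 := ℂ) A x⟫).re := by
    rw [hinner]
    have hre : (lam1 * (s0 : ℂ)^2 + (m : ℂ) * s0 * s1 + lam2 * (s1 : ℂ)^2).re
        = lam1.re * s0^2 + m * (s0 * s1) + lam2.re * s1^2 := by
      simp [Complex.add_re, Complex.mul_re, Complex.mul_im, Complex.ofReal_re,
        Complex.ofReal_im, pow_two]
      ring
    rw [hre, hs0sq, hs1sq, hss,
      show lam1.re = -p by rw [hp_def]; ring, show lam2.re = -q by rw [hq_def]; ring]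
    have := keyIneq p q m hp hq hm
    linarith
  obtain ⟨t, ht, hgt⟩ := auxGrowth A x hxnorm hpos
  exact ⟨t, ht, hgt⟩
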